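/- Let (Aᵢ)_{i∈[n]} be independent Bernoulli random variables with parameters pᵢ ≤ p, and let (xᵢ) be reals with Σᵢ xᵢ² ≤ 1, |xᵢ| ≤ 1, and Σᵢ|xᵢ| ≤ √n. Set Y = Σᵢ Aᵢ xᵢ. Then E[Y⁴] ≤ C·(p·Σᵢxᵢ⁴ + p²·(Σᵢxᵢ²)² + p³·Σᵢ|xᵢ|·Σᵢ|xᵢ|³ + p⁴·(Σᵢ|xᵢ|)⁴) for an absolute constant C ≤ 6. -/

import Mathlib

open MeasureTheory ProbabilityTheory Finset
private lemma integrable_of_bound {Ω : Type*} [MeasurableSpace Ω] {μ : Measure Ω}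
    [IsFiniteMeasure μ] {f : Ω → ℝ} (hf : Measurable f) (C : ℝ) (h : ∀ ω, |f ω| ≤ C) :
    Integrable f μ :=
  (integrable_const C).mono' hf.aestronglyMeasurable (ae_of_all _ (by simpa using h))

private lemma sq_amgm {b c d : ℝ} (hb : 0 ≤ b) (hc : 0 ≤ c) (hd : 0 ≤ d)
    (h : d ^ 2 ≤ b * c) : 2 * d ≤ b + c := by
  have key : (2 * d) ^ 2 ≤ (b + c) ^ 2 := by nlinarith [sq_nonneg (b - c)]
  have := le_of_pow_le_pow_left₀ two_ne_zero (by linarith : (0:ℝ) ≤ b + c) key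
  linarith

private lemma cube_amgm {a c d : ℝ} (ha : 0 ≤ a) (hc : 0 ≤ c) (hd : 0 ≤ d)
    (h : d ^ 3 ≤ a * c ^ 2) : 3 * d ≤ a + 2 * c := by
  have h8 : 0 ≤ (a - c) ^ 2 * (a + 8 * c) := mul_nonneg (sq_nonneg _) (by linarith)
  have key : d ^ 3 ≤ ((a + 2 * c) / 3) ^ 3 := by nlinarith
  have := le_of_pow_le_pow_left₀ (by norm_num : (3:ℕ) ≠ 0) (by positivity) key
  linarith

private lemma final_ineq {p q s U V : ℝ} (hp : 0 ≤ p) (hq : 0 ≤ q) (hs : 0 ≤ s)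
    (hU : 0 ≤ U) (hV : 0 ≤ V) (h1 : U ^ 2 ≤ q * s) (h2 : s ^ 2 ≤ U * V) :
    p * q + 3 * p ^ 2 * s ^ 2 + 4 * p ^ 2 * U * V + 6 * p ^ 3 * s * V ^ 2 + p ^ 4 * V ^ 4 ≤
      6 * (p * q + p ^ 2 * s ^ 2 + p ^ 3 * V * U + p ^ 4 * V ^ 4) := by
  have hs3 : s ^ 3 ≤ q * V ^ 2 := by
    rcases eq_or_lt_of_le hs with h0 | h0
    · rw [← h0]; simpa using mul_nonneg hq (sq_nonneg V)
    · have h4 : s ^ 4 ≤ q * s * V ^ 2 := by nlinarith [mul_le_mul h1 h2 (sq_nonneg s) (mul_nonneg hq hs)]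
      nlinarith
  have hi : 2 * (p ^ 2 * U * V) ≤ p * q + p ^ 3 * s * V ^ 2 := by
    apply sq_amgm (by positivity) (by positivity) (by positivity)
    have : U ^ 2 * V ^ 2 ≤ q * s * V ^ 2 := by nlinarith [sq_nonneg V]
    nlinarith [pow_nonneg hp 4]
  have hii : 3 * (p ^ 3 * s * V ^ 2) ≤ p * q + 2 * (p ^ 4 * V ^ 4) := by
    apply cube_amgm (by positivity) (by positivity) (by positivity)
    have : p ^ 9 * (s ^ 3 * V ^ 6) ≤ p ^ 9 * (q * V ^ 2 * V ^ 6) := by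
      apply mul_le_mul_of_nonneg_left _ (by positivity)
      nlinarith [pow_nonneg hV 6]
    nlinarith
  have hiii : 2 * (p ^ 3 * s * V ^ 2) ≤ p ^ 2 * s ^ 2 + p ^ 4 * V ^ 4 := by
    apply sq_amgm (by positivity) (by positivity) (by positivity)
    nlinarith
  nlinarith [mul_nonneg (mul_nonneg (pow_nonneg hp 3) hV) hU, mul_nonneg hp hq,
    mul_nonneg (mul_nonneg (mul_nonneg hp hp) hs) hs]

private lemma bern_moments {n : ℕ} {Ω : Type*} [MeasurableSpace Ω] (μ : Measure Ω)
    [IsProbabilityMeasure μ]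
    (A : Fin n → Ω → ℝ) (hmeas : ∀ i, Measurable (A i))
    (hval : ∀ i ω, A i ω = 0 ∨ A i ω = 1)
    (hindep : iIndepFun A μ)
    (pvec : Fin n → ℝ) (p : ℝ) (hp : ∀ i, pvec i ≤ p) (hp0 : 0 ≤ p)
    (hbern : ∀ i, ∫ ω, A i ω ∂μ = pvec i)
    (y : Fin n → ℝ) (hy : ∀ i, 0 ≤ y i) (S : Finset (Fin n)) :
    (∫ ω, (∑ i ∈ S, A i ω * y i) ∂μ ≤ p * ∑ i ∈ S, y i) ∧
    (∫ ω, (∑ i ∈ S, A i ω * y i) ^ 2 ∂μ ≤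
      p * (∑ i ∈ S, y i ^ 2) + p ^ 2 * (∑ i ∈ S, y i) ^ 2) ∧
    (∫ ω, (∑ i ∈ S, A i ω * y i) ^ 3 ∂μ ≤
      p * (∑ i ∈ S, y i ^ 3) + 3 * p ^ 2 * (∑ i ∈ S, y i ^ 2) * (∑ i ∈ S, y i) +
        p ^ 3 * (∑ i ∈ S, y i) ^ 3) ∧
    (∫ ω, (∑ i ∈ S, A i ω * y i) ^ 4 ∂μ ≤
      p * (∑ i ∈ S, y i ^ 4) + 3 * p ^ 2 * (∑ i ∈ S, y i ^ 2) ^ 2 +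
        4 * p ^ 2 * (∑ i ∈ S, y i ^ 3) * (∑ i ∈ S, y i) +
        6 * p ^ 3 * (∑ i ∈ S, y i ^ 2) * (∑ i ∈ S, y i) ^ 2 +
        p ^ 4 * (∑ i ∈ S, y i) ^ 4) := by
  classical
  have hA01 : ∀ i ω, 0 ≤ A i ω ∧ A i ω ≤ 1 := by
    intro i ω; rcases hval i ω with h | h <;> rw [h] <;> norm_num
  induction S using Finset.induction_on with
  | empty => simp
  | @insert a S ha IH =>
    obtain ⟨IH1, IH2, IH3, IH4⟩ := IH
    set W : Ω → ℝ := fun ω => ∑ i ∈ S, A i ω * y i with hW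
    set t : ℝ := y a with hta
    set VS : ℝ := ∑ i ∈ S, y i with hVS
    set sS : ℝ := ∑ i ∈ S, y i ^ 2 with hsS
    set US : ℝ := ∑ i ∈ S, y i ^ 3 with hUS
    set qS : ℝ := ∑ i ∈ S, y i ^ 4 with hqS
    have ht0 : 0 ≤ t := hy a
    have hVS0 : 0 ≤ VS := Finset.sum_nonneg fun i _ => hy i
    have hsS0 : 0 ≤ sS := Finset.sum_nonneg fun i _ => by positivity
    have hUS0 : 0 ≤ US := Finset.sum_nonneg fun i _ => pow_nonneg (hy i) 3
    have hW0 : ∀ ω, 0 ≤ W ω :=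
      fun ω => Finset.sum_nonneg fun i _ => mul_nonneg (hA01 i ω).1 (hy i)
    have hWle : ∀ ω, W ω ≤ VS := by
      intro ω
      apply Finset.sum_le_sum
      intro i _
      calc A i ω * y i ≤ 1 * y i := mul_le_mul_of_nonneg_right (hA01 i ω).2 (hy i)
        _ = y i := one_mul _
    have hWmeas : Measurable W := by
      apply Finset.measurable_sum
      intro i _
      exact (hmeas i).mul_const _
    have hWabs : ∀ (k : ℕ) (ω : Ω), |W ω ^ k| ≤ VS ^ k := by
      intro k ω
      rw [abs_of_nonneg (pow_nonneg (hW0 ω) k)]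
      exact pow_le_pow_left₀ (hW0 ω) (hWle ω) k
    have hAabs : ∀ ω, |A a ω| ≤ 1 := by
      intro ω; rw [abs_of_nonneg (hA01 a ω).1]; exact (hA01 a ω).2
    have IA : Integrable (A a) μ := integrable_of_bound (hmeas a) 1 hAabs
    have IW : ∀ k : ℕ, Integrable (fun ω => W ω ^ k) μ :=
      fun k => integrable_of_bound (hWmeas.pow_const k) (VS ^ k) (hWabs k)
    have IWA : ∀ k : ℕ, Integrable (fun ω => W ω ^ k * A a ω) μ := by
      intro k
      apply integrable_of_bound ((hWmeas.pow_const k).mul (hmeas a)) (VS ^ k)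
      intro ω
      rw [Pi.mul_apply, abs_mul]
      calc |W ω ^ k| * |A a ω| ≤ VS ^ k * 1 :=
            mul_le_mul (hWabs k ω) (hAabs ω) (abs_nonneg _) (pow_nonneg hVS0 k)
        _ = VS ^ k := mul_one _
    -- independence of W and A a
    have hInd : IndepFun W (A a) μ := by
      have h2 : iIndepFun
          (fun i => (fun r : ℝ => r * (if i = a then 1 else y i)) ∘ A i) μ :=
        hindep.comp _ (fun i => measurable_mul_const _)
      have h3 := h2.indepFun_finsetSum_of_notMem
        (fun i => (hmeas i).mul_const _) ha
      have e1 : (∑ j ∈ S, (fun r : ℝ => r * (if j = a then 1 else y j)) ∘ A j) = W := by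
        funext ω
        rw [Finset.sum_apply]
        refine Finset.sum_congr rfl fun j hj => ?_
        have : j ≠ a := ne_of_mem_of_not_mem hj ha
        simp [this]
      have e2 : ((fun r : ℝ => r * (if a = a then 1 else y a)) ∘ A a) = A a := by
        funext ω; simp
      rw [e1, e2] at h3
      exact h3
    have hmul : ∀ k : ℕ, ∫ ω, W ω ^ k * A a ω ∂μ = (∫ ω, W ω ^ k ∂μ) * pvec a := by
      intro k
      have hk : IndepFun (fun ω => W ω ^ k) (A a) μ :=
        hInd.comp (measurable_id.pow_const k) measurable_id
      have := hk.integral_mul_eq_mul_integral (IW k).aestronglyMeasurable IA.aestronglyMeasurable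
      rw [← hbern a]
      simpa [Pi.mul_apply] using this
    set M1 : ℝ := ∫ ω, W ω ∂μ with hM1d
    set M2 : ℝ := ∫ ω, W ω ^ 2 ∂μ with hM2d
    set M3 : ℝ := ∫ ω, W ω ^ 3 ∂μ with hM3d
    set M4 : ℝ := ∫ ω, W ω ^ 4 ∂μ with hM4d
    have hM10 : 0 ≤ M1 := integral_nonneg fun ω => hW0 ω
    have hM20 : 0 ≤ M2 := integral_nonneg fun ω => pow_nonneg (hW0 ω) 2
    have hM30 : 0 ≤ M3 := integral_nonneg fun ω => pow_nonneg (hW0 ω) 3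
    have hpa0 : 0 ≤ pvec a := by
      rw [← hbern a]; exact integral_nonneg fun ω => (hA01 a ω).1
    have hpa : pvec a ≤ p := hp a
    have hsum : ∀ ω, ∑ i ∈ insert a S, A i ω * y i = W ω + A a ω * t := by
      intro ω; rw [Finset.sum_insert ha]; ring
    have hW1 : Integrable W μ := by simpa using IW 1
    have hM1W : ∫ ω, W ω ∂μ = M1 := rfl
    -- integral identities
    have hmul1 : ∫ ω, W ω * A a ω ∂μ = M1 * pvec a := by
      have := hmul 1; simpa using this
    have hIA : ∫ ω, A a ω ∂μ = pvec a := hbern a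
    have hint1 : ∫ ω, (∑ i ∈ insert a S, A i ω * y i) ∂μ = M1 + pvec a * t := by
      have h1 : (fun ω => ∑ i ∈ insert a S, A i ω * y i)
          = fun ω => W ω + t * A a ω := by
        funext ω; rw [hsum ω]; ring
      rw [h1, integral_add hW1 (IA.const_mul t), integral_const_mul, hIA]
      ring
    have hint2 : ∫ ω, (∑ i ∈ insert a S, A i ω * y i) ^ 2 ∂μ
        = M2 + pvec a * (2 * t * M1 + t ^ 2) := by
      have h1 : (fun ω => (∑ i ∈ insert a S, A i ω * y i) ^ 2)
          = fun ω => W ω ^ 2 + ((2 * t) * (W ω ^ 1 * A a ω) + t ^ 2 * A a ω) := by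
        funext ω; rw [hsum ω]; rcases hval a ω with h | h <;> rw [h] <;> ring
      have J1 : Integrable (fun ω => (2 * t) * (W ω ^ 1 * A a ω) + t ^ 2 * A a ω) μ :=
        ((IWA 1).const_mul (2*t)).add (IA.const_mul (t^2))
      rw [h1, integral_add (IW 2) J1,
        integral_add ((IWA 1).const_mul (2*t)) (IA.const_mul (t^2)),
        integral_const_mul, integral_const_mul, hmul 1, hIA]
      simp only [pow_one, ← hM1d]
      ring
    have hint3 : ∫ ω, (∑ i ∈ insert a S, A i ω * y i) ^ 3 ∂μ
        = M3 + pvec a * (3 * t * M2 + 3 * t ^ 2 * M1 + t ^ 3) := by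
      have h1 : (fun ω => (∑ i ∈ insert a S, A i ω * y i) ^ 3)
          = fun ω => W ω ^ 3 + ((3 * t) * (W ω ^ 2 * A a ω) +
              ((3 * t ^ 2) * (W ω ^ 1 * A a ω) + t ^ 3 * A a ω)) := by
        funext ω; rw [hsum ω]; rcases hval a ω with h | h <;> rw [h] <;> ring
      have J1 : Integrable (fun ω => (3 * t ^ 2) * (W ω ^ 1 * A a ω) + t ^ 3 * A a ω) μ :=
        ((IWA 1).const_mul (3*t^2)).add (IA.const_mul (t^3))
      have J2 : Integrable (fun ω => (3 * t) * (W ω ^ 2 * A a ω) +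
          ((3 * t ^ 2) * (W ω ^ 1 * A a ω) + t ^ 3 * A a ω)) μ :=
        ((IWA 2).const_mul (3*t)).add J1
      rw [h1, integral_add (IW 3) J2,
        integral_add ((IWA 2).const_mul (3*t)) J1,
        integral_add ((IWA 1).const_mul (3*t^2)) (IA.const_mul (t^3)),
        integral_const_mul, integral_const_mul, integral_const_mul, hmul 2, hmul 1, hIA]
      simp only [pow_one, ← hM1d, ← hM2d]
      ring
    have hint4 : ∫ ω, (∑ i ∈ insert a S, A i ω * y i) ^ 4 ∂μ
        = M4 + pvec a * (4 * t * M3 + 6 * t ^ 2 * M2 + 4 * t ^ 3 * M1 + t ^ 4) := by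
      have h1 : (fun ω => (∑ i ∈ insert a S, A i ω * y i) ^ 4)
          = fun ω => W ω ^ 4 + ((4 * t) * (W ω ^ 3 * A a ω) +
              ((6 * t ^ 2) * (W ω ^ 2 * A a ω) +
              ((4 * t ^ 3) * (W ω ^ 1 * A a ω) + t ^ 4 * A a ω))) := by
        funext ω; rw [hsum ω]; rcases hval a ω with h | h <;> rw [h] <;> ring
      have J1 : Integrable (fun ω => (4 * t ^ 3) * (W ω ^ 1 * A a ω) + t ^ 4 * A a ω) μ :=
        ((IWA 1).const_mul (4*t^3)).add (IA.const_mul (t^4))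
      have J2 : Integrable (fun ω => (6 * t ^ 2) * (W ω ^ 2 * A a ω) +
          ((4 * t ^ 3) * (W ω ^ 1 * A a ω) + t ^ 4 * A a ω)) μ :=
        ((IWA 2).const_mul (6*t^2)).add J1
      have J3 : Integrable (fun ω => (4 * t) * (W ω ^ 3 * A a ω) +
          ((6 * t ^ 2) * (W ω ^ 2 * A a ω) +
            ((4 * t ^ 3) * (W ω ^ 1 * A a ω) + t ^ 4 * A a ω))) μ :=
        ((IWA 3).const_mul (4*t)).add J2
      rw [h1, integral_add (IW 4) J3,
        integral_add ((IWA 3).const_mul (4*t)) J2,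
        integral_add ((IWA 2).const_mul (6*t^2)) J1,
        integral_add ((IWA 1).const_mul (4*t^3)) (IA.const_mul (t^4)),
        integral_const_mul, integral_const_mul, integral_const_mul, integral_const_mul,
        hmul 3, hmul 2, hmul 1, hIA]
      simp only [pow_one, ← hM1d, ← hM2d, ← hM3d]
      ring
    -- sums over insert
    have es1 : ∑ i ∈ insert a S, y i = t + VS := by rw [Finset.sum_insert ha]
    have es2 : ∑ i ∈ insert a S, y i ^ 2 = t ^ 2 + sS := by rw [Finset.sum_insert ha]
    have es3 : ∑ i ∈ insert a S, y i ^ 3 = t ^ 3 + US := by rw [Finset.sum_insert ha]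
    have es4 : ∑ i ∈ insert a S, y i ^ 4 = t ^ 4 + qS := by rw [Finset.sum_insert ha]
    clear_value M1 M2 M3 M4 W t VS sS US qS
    clear hmul hInd IW IWA IA hWabs hWmeas hWle hW0 hAabs hW1 hM1W hmul1 hIA hsum
    refine ⟨?_, ?_, ?_, ?_⟩
    · rw [hint1, es1]
      have hid : p * (t + VS) = p * VS + p * t := by ring
      linarith [IH1, mul_le_mul_of_nonneg_right hpa ht0]
    · rw [hint2, es2, es1]
      have hinner : 2 * t * M1 + t ^ 2 ≤ 2 * t * (p * VS) + t ^ 2 := by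
        have := mul_le_mul_of_nonneg_left IH1 (by positivity : (0:ℝ) ≤ 2 * t)
        linarith
      have hx : pvec a * (2 * t * M1 + t ^ 2) ≤ p * (2 * t * (p * VS) + t ^ 2) := by
        apply mul_le_mul hpa hinner (by positivity) hp0
      have hid : p * (t ^ 2 + sS) + p ^ 2 * (t + VS) ^ 2
          = (p * sS + p ^ 2 * VS ^ 2) + p * (2 * t * (p * VS) + t ^ 2) + (p * t) ^ 2 := by
        ring
      linarith [IH2, hx, sq_nonneg (p * t)]
    · rw [hint3, es3, es2, es1]
      have i2 : 3 * t * M2 ≤ 3 * t * (p * sS + p ^ 2 * VS ^ 2) :=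
        mul_le_mul_of_nonneg_left IH2 (by positivity)
      have i1 : 3 * t ^ 2 * M1 ≤ 3 * t ^ 2 * (p * VS) :=
        mul_le_mul_of_nonneg_left IH1 (by positivity)
      have hx : pvec a * (3 * t * M2 + 3 * t ^ 2 * M1 + t ^ 3)
          ≤ p * (3 * t * (p * sS + p ^ 2 * VS ^ 2) + 3 * t ^ 2 * (p * VS) + t ^ 3) := by
        apply mul_le_mul hpa (by linarith) (by positivity) hp0
      have hdiff : 0 ≤ 3 * p ^ 2 * t ^ 3 + 3 * p ^ 3 * VS * t ^ 2 + p ^ 3 * t ^ 3 := by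
        positivity
      have hid : p * (t ^ 3 + US) + 3 * p ^ 2 * (t ^ 2 + sS) * (t + VS) + p ^ 3 * (t + VS) ^ 3
          = (p * US + 3 * p ^ 2 * sS * VS + p ^ 3 * VS ^ 3)
            + p * (3 * t * (p * sS + p ^ 2 * VS ^ 2) + 3 * t ^ 2 * (p * VS) + t ^ 3)
            + (3 * p ^ 2 * t ^ 3 + 3 * p ^ 3 * VS * t ^ 2 + p ^ 3 * t ^ 3) := by
        ring
      linarith [hx, hdiff, IH3]
    · rw [hint4, es4, es3, es2, es1]
      have i3 : 4 * t * M3 ≤ 4 * t * (p * US + 3 * p ^ 2 * sS * VS + p ^ 3 * VS ^ 3) :=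
        mul_le_mul_of_nonneg_left IH3 (by positivity)
      have i2 : 6 * t ^ 2 * M2 ≤ 6 * t ^ 2 * (p * sS + p ^ 2 * VS ^ 2) :=
        mul_le_mul_of_nonneg_left IH2 (by positivity)
      have i1 : 4 * t ^ 3 * M1 ≤ 4 * t ^ 3 * (p * VS) :=
        mul_le_mul_of_nonneg_left IH1 (by positivity)
      have hx : pvec a * (4 * t * M3 + 6 * t ^ 2 * M2 + 4 * t ^ 3 * M1 + t ^ 4)
          ≤ p * (4 * t * (p * US + 3 * p ^ 2 * sS * VS + p ^ 3 * VS ^ 3)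
              + 6 * t ^ 2 * (p * sS + p ^ 2 * VS ^ 2) + 4 * t ^ 3 * (p * VS) + t ^ 4) := by
        apply mul_le_mul hpa (by linarith) (by positivity) hp0
      have hdiff : 0 ≤ 7 * p ^ 2 * t ^ 4 + 6 * p ^ 3 * sS * t ^ 2 + 12 * p ^ 3 * VS * t ^ 3
          + 6 * p ^ 3 * t ^ 4 + 6 * p ^ 4 * VS ^ 2 * t ^ 2 + 4 * p ^ 4 * VS * t ^ 3
          + p ^ 4 * t ^ 4 := by positivity
      have hid : p * (t ^ 4 + qS) + 3 * p ^ 2 * (t ^ 2 + sS) ^ 2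
            + 4 * p ^ 2 * (t ^ 3 + US) * (t + VS)
            + 6 * p ^ 3 * (t ^ 2 + sS) * (t + VS) ^ 2 + p ^ 4 * (t + VS) ^ 4
          = (p * qS + 3 * p ^ 2 * sS ^ 2 + 4 * p ^ 2 * US * VS + 6 * p ^ 3 * sS * VS ^ 2
              + p ^ 4 * VS ^ 4)
            + p * (4 * t * (p * US + 3 * p ^ 2 * sS * VS + p ^ 3 * VS ^ 3)
              + 6 * t ^ 2 * (p * sS + p ^ 2 * VS ^ 2) + 4 * t ^ 3 * (p * VS) + t ^ 4)
            + (7 * p ^ 2 * t ^ 4 + 6 * p ^ 3 * sS * t ^ 2 + 12 * p ^ 3 * VS * t ^ 3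
              + 6 * p ^ 3 * t ^ 4 + 6 * p ^ 4 * VS ^ 2 * t ^ 2 + 4 * p ^ 4 * VS * t ^ 3
              + p ^ 4 * t ^ 4) := by
        ring
      linarith [hx, hdiff, IH4]

/-- Fourth-moment bound for a weighted sum of independent Bernoulli random
variables: if `Aᵢ ~ Bernoulli(pᵢ)` with `pᵢ ≤ p`, and the weights satisfy
`∑ xᵢ² ≤ 1`, `|xᵢ| ≤ 1`, `∑ |xᵢ| ≤ √n`, then `Y = ∑ Aᵢ xᵢ` satisfies
`E[Y⁴] ≤ 6 (p ∑ xᵢ⁴ + p² (∑ xᵢ²)² + p³ (∑|xᵢ|)(∑|xᵢ|³) + p⁴ (∑|xᵢ|)⁴)`. -/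
theorem stmt_8 (n : ℕ) {Ω : Type*} [MeasureSpace Ω] (μ : Measure Ω)
    [IsProbabilityMeasure μ]
    (A : Fin n → Ω → ℝ) (hmeas : ∀ i, Measurable (A i))
    (hval : ∀ i ω, A i ω = 0 ∨ A i ω = 1)
    (hindep : iIndepFun A μ)
    (pvec : Fin n → ℝ) (p : ℝ) (hp : ∀ i, pvec i ≤ p)
    (hbern : ∀ i, ∫ ω, A i ω ∂μ = pvec i)
    (x : Fin n → ℝ) (hx2 : ∑ i, x i ^ 2 ≤ 1) (hxinf : ∀ i, |x i| ≤ 1)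
    (hx1 : ∑ i, |x i| ≤ Real.sqrt n) :
    ∫ ω, (∑ i, A i ω * x i) ^ 4 ∂μ ≤
      6 * (p * ∑ i, x i ^ 4 + p ^ 2 * (∑ i, x i ^ 2) ^ 2 +
        p ^ 3 * (∑ i, |x i|) * (∑ i, |x i| ^ 3) + p ^ 4 * (∑ i, |x i|) ^ 4) := by
  classical
  have hA01 : ∀ i ω, 0 ≤ A i ω ∧ A i ω ≤ 1 := by
    intro i ω; rcases hval i ω with h | h <;> rw [h] <;> norm_num
  obtain hn0 | hn := Nat.eq_zero_or_pos n
  · subst hn0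
    simp
  · have hp0 : 0 ≤ p := by
      refine le_trans ?_ (hp ⟨0, hn⟩)
      rw [← hbern ⟨0, hn⟩]
      exact integral_nonneg fun ω => (hA01 _ ω).1
    obtain ⟨-, -, -, hM4⟩ := bern_moments μ A hmeas hval hindep pvec p hp hp0 hbern
      (fun i => |x i|) (fun i => abs_nonneg _) Finset.univ
    have e2 : (∑ i, |x i| ^ 2) = ∑ i, x i ^ 2 :=
      Finset.sum_congr rfl fun i _ => sq_abs _
    have e4 : (∑ i, |x i| ^ 4) = ∑ i, x i ^ 4 :=
      Finset.sum_congr rfl fun i _ => by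
        rw [pow_abs, abs_of_nonneg (by positivity : (0:ℝ) ≤ x i ^ 4)]
    rw [e2, e4] at hM4
    -- pointwise comparison and integrability
    have habs : ∀ ω, |∑ i, A i ω * x i| ≤ ∑ i, A i ω * |x i| := by
      intro ω
      refine (Finset.abs_sum_le_sum_abs _ _).trans (le_of_eq ?_)
      refine Finset.sum_congr rfl fun i _ => ?_
      rw [abs_mul, abs_of_nonneg (hA01 i ω).1]
    have hYle : ∀ ω, ∑ i, A i ω * |x i| ≤ ∑ i, |x i| := by
      intro ω
      refine Finset.sum_le_sum fun i _ => ?_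
      calc A i ω * |x i| ≤ 1 * |x i| :=
            mul_le_mul_of_nonneg_right (hA01 i ω).2 (abs_nonneg _)
        _ = |x i| := one_mul _
    have hY0 : ∀ ω, 0 ≤ ∑ i, A i ω * |x i| :=
      fun ω => Finset.sum_nonneg fun i _ => mul_nonneg (hA01 i ω).1 (abs_nonneg _)
    have hmX : Measurable fun ω => ∑ i, A i ω * x i :=
      Finset.measurable_sum _ fun i _ => (hmeas i).mul_const _
    have hmY : Measurable fun ω => ∑ i, A i ω * |x i| :=
      Finset.measurable_sum _ fun i _ => (hmeas i).mul_const _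
    have I1 : Integrable (fun ω => (∑ i, A i ω * x i) ^ 4) μ := by
      apply integrable_of_bound (hmX.pow_const 4) ((∑ i, |x i|) ^ 4)
      intro ω
      rw [abs_pow]
      exact pow_le_pow_left₀ (abs_nonneg _) ((habs ω).trans (hYle ω)) 4
    have I2 : Integrable (fun ω => (∑ i, A i ω * |x i|) ^ 4) μ := by
      apply integrable_of_bound (hmY.pow_const 4) ((∑ i, |x i|) ^ 4)
      intro ω
      rw [abs_pow]
      refine pow_le_pow_left₀ (abs_nonneg _) ?_ 4
      rw [abs_of_nonneg (hY0 ω)]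
      exact hYle ω
    have hmono : ∫ ω, (∑ i, A i ω * x i) ^ 4 ∂μ ≤ ∫ ω, (∑ i, A i ω * |x i|) ^ 4 ∂μ := by
      apply integral_mono I1 I2
      intro ω
      show (∑ i, A i ω * x i) ^ 4 ≤ (∑ i, A i ω * |x i|) ^ 4
      have h1 : (∑ i, A i ω * x i) ^ 4 = |∑ i, A i ω * x i| ^ 4 := by
        rw [pow_abs, abs_of_nonneg (by positivity : (0:ℝ) ≤ (∑ i, A i ω * x i) ^ 4)]
      rw [h1]
      exact pow_le_pow_left₀ (abs_nonneg _) (habs ω) 4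
    -- Cauchy-Schwarz facts
    have hU2 : (∑ i, |x i| ^ 3) ^ 2 ≤ (∑ i, x i ^ 4) * (∑ i, x i ^ 2) := by
      have h := Finset.sum_mul_sq_le_sq_mul_sq Finset.univ (fun i => x i ^ 2)
        (fun i => |x i|)
      have ea : (∑ i, x i ^ 2 * |x i|) = ∑ i, |x i| ^ 3 :=
        Finset.sum_congr rfl fun i _ => by rw [← sq_abs]; ring
      have eb : (∑ i, (x i ^ 2) ^ 2) = ∑ i, x i ^ 4 :=
        Finset.sum_congr rfl fun i _ => by ring
      have ec : (∑ i, |x i| ^ 2) = ∑ i, x i ^ 2 :=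
        Finset.sum_congr rfl fun i _ => sq_abs _
      rw [ea, eb, ec] at h
      exact h
    have hs2 : (∑ i, x i ^ 2) ^ 2 ≤ (∑ i, |x i| ^ 3) * (∑ i, |x i|) := by
      have h := Finset.sum_mul_sq_le_sq_mul_sq Finset.univ
        (fun i => |x i| * Real.sqrt |x i|) (fun i => Real.sqrt |x i|)
      have ea : (∑ i, (|x i| * Real.sqrt |x i|) * Real.sqrt |x i|) = ∑ i, x i ^ 2 :=
        Finset.sum_congr rfl fun i _ => by
          rw [mul_assoc, Real.mul_self_sqrt (abs_nonneg _), ← pow_two, sq_abs]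
      have eb : (∑ i, (|x i| * Real.sqrt |x i|) ^ 2) = ∑ i, |x i| ^ 3 :=
        Finset.sum_congr rfl fun i _ => by
          rw [mul_pow, Real.sq_sqrt (abs_nonneg _)]; ring
      have ec : (∑ i, (Real.sqrt |x i|) ^ 2) = ∑ i, |x i| :=
        Finset.sum_congr rfl fun i _ => Real.sq_sqrt (abs_nonneg _)
      rw [ea, eb, ec] at h
      exact h
    have hfin := final_ineq hp0
      (Finset.sum_nonneg fun i _ => by positivity : (0:ℝ) ≤ ∑ i, x i ^ 4)
      (Finset.sum_nonneg fun i _ => by positivity : (0:ℝ) ≤ ∑ i, x i ^ 2)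
      (Finset.sum_nonneg fun i _ => by positivity : (0:ℝ) ≤ ∑ i, |x i| ^ 3)
      (Finset.sum_nonneg fun i _ => by positivity : (0:ℝ) ≤ ∑ i, |x i|)
      hU2 hs2
    calc ∫ ω, (∑ i, A i ω * x i) ^ 4 ∂μ
        ≤ ∫ ω, (∑ i, A i ω * |x i|) ^ 4 ∂μ := hmono
      _ ≤ p * (∑ i, x i ^ 4) + 3 * p ^ 2 * (∑ i, x i ^ 2) ^ 2 +
          4 * p ^ 2 * (∑ i, |x i| ^ 3) * (∑ i, |x i|) +
          6 * p ^ 3 * (∑ i, x i ^ 2) * (∑ i, |x i|) ^ 2 +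
          p ^ 4 * (∑ i, |x i|) ^ 4 := hM4
      _ ≤ 6 * (p * (∑ i, x i ^ 4) + p ^ 2 * (∑ i, x i ^ 2) ^ 2 +
          p ^ 3 * (∑ i, |x i|) * (∑ i, |x i| ^ 3) + p ^ 4 * (∑ i, |x i|) ^ 4) := by
          linarith [hfin]
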